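/- Fix k ≥ 1 and let (Q_m)_{0 ≤ m ≤ k−1} be a dual Hermite family for H_k. Then for every 0 ≤ m ≤ k − 1: Σ_{x ∈ roots(H_k)} Q_m(x)² = k·(k−1)·⋯·(k−m), i.e. the descending factorial product of m + 1 factors starting at k (equivalently k!/(k−m−1)!). -/

import Mathlib

open Polynomial


noncomputable def hermiteR (k : ℕ) : Polynomial ℝ :=
  (Polynomial.hermite k).map (Int.castRingHom ℝ)

/-- A dual Hermite family for `H_k`: real polynomials `Q_0, …, Q_{k-1}` with `Q_m` monic of
degree `m`, orthogonal for the counting measure on the `k` distinct real roots of `H_k`. -/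
def IsDualHermiteFamily (k : ℕ) (Q : ℕ → Polynomial ℝ) : Prop :=
  (∀ m < k, (Q m).Monic ∧ (Q m).natDegree = m) ∧
  ∀ m < k, ∀ n < k, m ≠ n →
    ((hermiteR k).roots.map (fun x => (Q m).eval x * (Q n).eval x)).sum = 0

lemma hermiteR_monic (n : ℕ) : (hermiteR n).Monic :=
  (Polynomial.hermite_monic n).map _

lemma hermiteR_natDegree (n : ℕ) : (hermiteR n).natDegree = n := by
  rw [hermiteR, (Polynomial.hermite_monic n).natDegree_map, Polynomial.natDegree_hermite]

lemma hermiteR_ne_zero (n : ℕ) : hermiteR n ≠ 0 := (hermiteR_monic n).ne_zero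

lemma hermiteR_zero : hermiteR 0 = 1 := by
  simp [hermiteR, Polynomial.hermite_zero]

lemma hermiteR_one : hermiteR 1 = X := by
  simp [hermiteR, Polynomial.hermite_one]

lemma hermiteR_succ (n : ℕ) :
    hermiteR (n + 1) = X * hermiteR n - derivative (hermiteR n) := by
  show (Polynomial.hermite (n+1)).map _ = _
  rw [Polynomial.hermite_succ, Polynomial.map_sub, Polynomial.map_mul, map_X,
    ← Polynomial.derivative_map]
  rfl

lemma derivative_hermiteR (n : ℕ) :
    derivative (hermiteR (n + 1)) = ((n : ℝ) + 1) • hermiteR n := by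
  induction n with
  | zero => simp [hermiteR_one, hermiteR_zero]
  | succ n ih =>
      rw [hermiteR_succ (n+1), derivative_sub, derivative_mul, derivative_X, one_mul, ih,
        derivative_smul]
      rw [mul_smul_comm, add_sub_assoc, ← smul_sub, ← hermiteR_succ n]
      push_cast
      module

lemma hermiteR_rec (n : ℕ) :
    hermiteR (n + 2) = X * hermiteR (n + 1) - ((n : ℝ) + 1) • hermiteR n := by
  rw [hermiteR_succ (n+1), derivative_hermiteR]

-- coprimality
lemma hermiteR_coprime (n : ℕ) : IsCoprime (hermiteR (n + 1)) (hermiteR n) := by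
  induction n with
  | zero => rw [hermiteR_zero]; exact isCoprime_one_right
  | succ n ih =>
      rw [hermiteR_rec n]
      have h1 : IsCoprime (-(((n:ℝ)+1) • hermiteR n)) (hermiteR (n+1)) := by
        rw [smul_eq_C_mul, neg_mul_eq_neg_mul]
        refine (isCoprime_mul_unit_left_left ?_ _ _).2 ih.symm
        exact (isUnit_C.2 (by positivity : (0:ℝ) < (n:ℝ)+1).ne'.isUnit).neg
      rw [sub_eq_neg_add]
      exact h1.add_mul_right_left X

lemma hermiteR_separable (n : ℕ) : (hermiteR (n + 1)).Separable := by
  rw [Polynomial.Separable, derivative_hermiteR]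
  rw [smul_eq_C_mul]
  exact (isCoprime_mul_unit_left_right
    (isUnit_C.2 (by positivity : (0:ℝ) < (n:ℝ)+1).ne'.isUnit) _ _).2 (hermiteR_coprime n)


lemma degree_msum_le {α : Type*} (t : Multiset α) (f : α → Polynomial ℝ) (d : WithBot ℕ)
    (h : ∀ x ∈ t, (f x).degree ≤ d) : ((t.map f).sum).degree ≤ d := by
  induction t using Multiset.induction with
  | empty => simp
  | cons a s ih =>
      rw [Multiset.map_cons, Multiset.sum_cons]
      exact le_trans (degree_add_le _ _)
        (max_le (h a (Multiset.mem_cons_self a s))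
          (ih (fun x hx => h x (Multiset.mem_cons_of_mem hx))))

lemma coeff_msum {α : Type*} (t : Multiset α) (f : α → Polynomial ℝ) (n : ℕ) :
    ((t.map f).sum).coeff n = (t.map (fun x => (f x).coeff n)).sum := by
  induction t using Multiset.induction with
  | empty => simp
  | cons a s ih => simp [ih]

-- key residue lemma
lemma key_sum (H : Polynomial ℝ) (hH : H.Monic) (k : ℕ) (hk : 0 < k)
    (hdeg : H.natDegree = k) (hcard : H.roots.card = k) (g : Polynomial ℝ) :
    (H.roots.map (fun x => g.eval x)).sum
      = ((g * derivative H) %ₘ H).coeff (k - 1) := by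
  classical
  set t := H.roots with ht
  have hprod : (t.map (fun a => X - C a)).prod = H :=
    prod_multiset_X_sub_C_of_monic_of_roots_card_eq hH (by rw [hcard, hdeg])
  set R : Polynomial ℝ :=
    (t.map (fun x => C (g.eval x) * ((t.erase x).map (fun a => X - C a)).prod)).sum with hR
  have herase : ∀ x ∈ t, (X - C x) * ((t.erase x).map (fun a => X - C a)).prod = H := by
    intro x hx
    rw [← hprod]
    conv_rhs => rw [← Multiset.cons_erase hx]
    rw [Multiset.map_cons, Multiset.prod_cons]
  have hder : derivative H =
      (t.map (fun x => ((t.erase x).map (fun a => X - C a)).prod)).sum := by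
    rw [← hprod, derivative_prod]
    congr 1
    apply Multiset.map_congr rfl
    intro x hx
    simp
  have hdvd : H ∣ g * derivative H - R := by
    rw [hder, hR, ← Multiset.sum_map_mul_left, ← Multiset.sum_map_sub]
    apply Multiset.dvd_sum
    intro y hy
    obtain ⟨x, hx, rfl⟩ := Multiset.mem_map.1 hy
    rw [← sub_mul, ← herase x hx]
    exact mul_dvd_mul (dvd_iff_isRoot.2 (by simp)) dvd_rfl
  have hmon : ∀ x ∈ t, (((t.erase x).map (fun a => X - C a)).prod).Monic :=
    fun x hx => monic_multiset_prod_of_monic _ _ (fun a _ => monic_X_sub_C a)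
  have hnd : ∀ x ∈ t, (((t.erase x).map (fun a => X - C a)).prod).natDegree = k - 1 := by
    intro x hx
    have hmon' : ∀ f ∈ (t.erase x).map (fun a => X - C a), f.Monic := fun f hf => by
      obtain ⟨b, _, rfl⟩ := Multiset.mem_map.1 hf; exact monic_X_sub_C b
    rw [natDegree_multiset_prod_of_monic _ hmon', Multiset.map_map]
    have : ∀ a ∈ t.erase x, (natDegree ∘ fun a => X - C a) a = 1 := fun a _ => by simp
    rw [Multiset.map_congr rfl this, Multiset.map_const', Multiset.sum_replicate, smul_eq_mul,
      mul_one, Multiset.card_erase_of_mem hx, hcard]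
    rfl
  have hRdeg : R.degree < H.degree := by
    rw [degree_eq_natDegree hH.ne_zero, hdeg]
    apply lt_of_le_of_lt (degree_msum_le _ _ ((k - 1 : ℕ) : WithBot ℕ) ?_)
    · exact_mod_cast WithBot.coe_lt_coe.2 (Nat.sub_lt hk one_pos)
    · intro x hx
      refine le_trans (degree_mul_le _ _) ?_
      rw [degree_eq_natDegree (hmon x hx).ne_zero, hnd x hx]
      refine le_trans (add_le_add degree_C_le le_rfl) ?_
      simp
  have hmod : (g * derivative H) %ₘ H = R := by
    have h1 : (g * derivative H - R) %ₘ H = 0 :=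
      (modByMonic_eq_zero_iff_dvd hH).2 hdvd
    rw [sub_modByMonic, (modByMonic_eq_self_iff hH).2 hRdeg, sub_eq_zero] at h1
    exact h1
  rw [hmod, hR, coeff_msum]
  apply congrArg
  apply Multiset.map_congr rfl
  intro x hx
  rw [coeff_C_mul]
  have : (((t.erase x).map (fun a => X - C a)).prod).coeff (k-1) = 1 := by
    have := (hmon x hx).coeff_natDegree
    rwa [hnd x hx] at this
  rw [this, mul_one]



noncomputable def Pf (k : ℕ) : ℕ → Polynomial ℝ
  | 0 => 1
  | 1 => X
  | (m+2) => X * Pf k (m+1) - (((k - (m+1) : ℕ) : ℝ)) • Pf k m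

lemma Pf_monic (k : ℕ) : ∀ m, (Pf k m).Monic ∧ (Pf k m).natDegree = m := by
  intro m
  induction m using Nat.strong_induction_on with
  | _ m ih =>
    match m with
    | 0 => exact ⟨monic_one, natDegree_one⟩
    | 1 => exact ⟨monic_X, natDegree_X⟩
    | (m+2) =>
      obtain ⟨h1m, h1d⟩ := ih (m+1) (by omega)
      obtain ⟨h0m, h0d⟩ := ih m (by omega)
      have hXm : (X * Pf k (m+1)).Monic := monic_X.mul h1m
      have hXd : (X * Pf k (m+1)).natDegree = m + 2 := by
        rw [monic_X.natDegree_mul h1m, natDegree_X, h1d]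
        omega
      have hlt : ((((k - (m+1) : ℕ) : ℝ)) • Pf k m).degree < (X * Pf k (m+1)).degree := by
        apply lt_of_le_of_lt (degree_smul_le _ _)
        rw [degree_eq_natDegree hXm.ne_zero, hXd]
        apply lt_of_le_of_lt degree_le_natDegree
        rw [h0d]
        exact_mod_cast WithBot.coe_lt_coe.2 (by omega)
      constructor
      · show (X * Pf k (m+1) - _).Monic
        exact hXm.sub_of_left hlt
      · show (X * Pf k (m+1) - _).natDegree = m + 2
        rw [← hXd]
        apply natDegree_sub_eq_left_of_natDegree_lt
        rw [hXd]
        exact lt_of_le_of_lt (natDegree_smul_le _ _) (by omega)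

lemma Pf_key (k : ℕ) (hk : 1 ≤ k) : ∀ m, m ≤ k - 1 →
    hermiteR k ∣ hermiteR (k-1) * Pf k m
      - C (((k-1).descFactorial m : ℕ) : ℝ) * hermiteR (k-1-m) := by
  intro m
  induction m using Nat.strong_induction_on with
  | _ m ih =>
    match m with
    | 0 => intro _; simp [Pf]
    | 1 =>
      intro h1
      obtain ⟨n, rfl⟩ : ∃ n, k = n + 2 := ⟨k - 2, by omega⟩
      simp only [show n + 2 - 1 = n + 1 from by omega, show n + 1 - 1 = n from by omega]
      refine ⟨1, ?_⟩
      rw [show Pf (n+2) 1 = X from rfl, Nat.descFactorial_one, hermiteR_rec n, smul_eq_C_mul]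
      push_cast
      ring
    | (m+2) =>
      intro hle
      obtain ⟨n, rfl⟩ : ∃ n, k = m + 3 + n := ⟨k - (m+3), by omega⟩
      obtain ⟨u, hu⟩ := ih (m+1) (by omega) (by omega)
      obtain ⟨v, hv⟩ := ih m (by omega) (by omega)
      simp only [show m + 3 + n - 1 = m + n + 2 from by omega,
        show m + n + 2 - (m + 1) = n + 1 from by omega,
        show m + n + 2 - m = n + 2 from by omega,
        show m + n + 2 - (m + 2) = n from by omega] at hu hv ⊢
      have hrec := hermiteR_rec n
      rw [smul_eq_C_mul] at hrec
      have hb : (((m+n+2).descFactorial (m+1) : ℕ) : ℝ)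
          = ((n:ℝ)+2) * (((m+n+2).descFactorial m : ℕ) : ℝ) := by
        rw [Nat.descFactorial_succ, show m+n+2-m = n+2 from by omega]; push_cast; ring
      have hc : (((m+n+2).descFactorial (m+2) : ℕ) : ℝ)
          = ((n:ℝ)+1) * (((m+n+2).descFactorial (m+1) : ℕ) : ℝ) := by
        rw [Nat.descFactorial_succ (m+n+2) (m+1), show m+n+2-(m+1) = n+1 from by omega]
        push_cast; ring
      refine ⟨X * u - C ((n:ℝ) + 2) * v, ?_⟩
      rw [show Pf (m+3+n) (m+2) = X * Pf (m+3+n) (m+1)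
        - (((m + 3 + n - (m+1) : ℕ) : ℝ)) • Pf (m+3+n) m from rfl,
        show m + 3 + n - (m+1) = n + 2 from by omega, smul_eq_C_mul]
      rw [hc, hb, map_mul, map_mul]
      rw [hb, map_mul] at hu
      push_cast at hu hv ⊢
      linear_combination (X : Polynomial ℝ) * hu - C ((n:ℝ)+2) * hv
        - C ((n:ℝ)+2) * C (((m+n+2).descFactorial m : ℕ) : ℝ) * hrec

-- Section 5/7: values of the bilinear form and uniqueness
noncomputable def Tf (k : ℕ) (g : Polynomial ℝ) : ℝ :=
  ((hermiteR k).roots.map (fun x => g.eval x)).sum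

lemma Tf_sub (k : ℕ) (g h : Polynomial ℝ) : Tf k (g - h) = Tf k g - Tf k h := by
  unfold Tf
  rw [← Multiset.sum_map_sub]
  apply congrArg
  apply Multiset.map_congr rfl
  intro x hx
  simp

lemma Tf_add (k : ℕ) (g h : Polynomial ℝ) : Tf k (g + h) = Tf k g + Tf k h := by
  unfold Tf
  rw [← Multiset.sum_map_add]
  apply congrArg
  apply Multiset.map_congr rfl
  intro x hx
  simp

lemma Tf_smul (k : ℕ) (c : ℝ) (g : Polynomial ℝ) : Tf k (c • g) = c * Tf k g := by
  unfold Tf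
  rw [← Multiset.sum_map_mul_left]
  apply congrArg
  apply Multiset.map_congr rfl
  intro x hx
  simp

lemma Tf_zero (k : ℕ) : Tf k 0 = 0 := by
  unfold Tf; simp

lemma Tval (k : ℕ) (hk : 1 ≤ k) (hcard : (hermiteR k).roots.card = k)
    {n m : ℕ} (hn : n ≤ m) (hm : m ≤ k - 1) :
    Tf k (Pf k n * Pf k m)
      = if n = m then ((k * (k-1).descFactorial m : ℕ) : ℝ) else 0 := by
  have hkey := key_sum (hermiteR k) (hermiteR_monic k) k hk (hermiteR_natDegree k) hcard
    (Pf k n * Pf k m)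
  have hder : derivative (hermiteR k) = (((k-1 : ℕ) : ℝ) + 1) • hermiteR (k-1) := by
    conv_lhs => rw [show k = (k-1)+1 from by omega]
    exact derivative_hermiteR (k-1)
  have hcast : (((k-1 : ℕ) : ℝ) + 1) = (k : ℝ) := by
    have : (k - 1) + 1 = k := by omega
    exact_mod_cast congrArg (Nat.cast (R := ℝ)) this
  -- rewrite the mod
  obtain ⟨w, hw⟩ := Pf_key k hk m hm
  have hdvd2 : hermiteR k ∣ (Pf k n * Pf k m * hermiteR (k-1))
      - C (((k-1).descFactorial m : ℕ) : ℝ) * (Pf k n * hermiteR (k-1-m)) := by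
    refine ⟨Pf k n * w, ?_⟩
    linear_combination (Pf k n) * hw
  have hmon2 : (Pf k n * hermiteR (k-1-m)).Monic :=
    (Pf_monic k n).1.mul (hermiteR_monic _)
  have hnd2 : (Pf k n * hermiteR (k-1-m)).natDegree = n + (k-1-m) := by
    rw [(Pf_monic k n).1.natDegree_mul (hermiteR_monic _), (Pf_monic k n).2,
      hermiteR_natDegree]
  have hdegR : (C (((k-1).descFactorial m : ℕ) : ℝ) * (Pf k n * hermiteR (k-1-m))).degree
      < (hermiteR k).degree := by
    rw [degree_eq_natDegree (hermiteR_ne_zero k), hermiteR_natDegree]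
    refine lt_of_le_of_lt (degree_mul_le _ _) ?_
    refine lt_of_le_of_lt (add_le_add degree_C_le degree_le_natDegree) ?_
    rw [hnd2]
    rw [zero_add]
    exact_mod_cast WithBot.coe_lt_coe.2 (by omega)
  have hmod2 : (Pf k n * Pf k m * hermiteR (k-1)) %ₘ hermiteR k
      = C (((k-1).descFactorial m : ℕ) : ℝ) * (Pf k n * hermiteR (k-1-m)) := by
    have h1 := (modByMonic_eq_zero_iff_dvd (hermiteR_monic k)).2 hdvd2
    rw [sub_modByMonic, (modByMonic_eq_self_iff (hermiteR_monic k)).2 hdegR, sub_eq_zero] at h1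
    exact h1
  rw [Tf] at *
  rw [hkey, hder, mul_smul_comm, smul_modByMonic, hmod2]
  rw [coeff_smul, coeff_C_mul, hcast]
  by_cases hnm : n = m
  · subst hnm
    have : (Pf k n * hermiteR (k-1-n)).coeff (k-1) = 1 := by
      have h := hmon2.coeff_natDegree
      rwa [hnd2, show n + (k-1-n) = k-1 from by omega] at h
    rw [if_pos rfl, this]
    push_cast [smul_eq_mul]
    ring
  · have : (Pf k n * hermiteR (k-1-m)).coeff (k-1) = 0 := by
      apply coeff_eq_zero_of_natDegree_lt
      rw [hnd2]; omega
    rw [if_neg hnm, this]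
    simp

lemma Tvanish (k : ℕ) (Q : ℕ → Polynomial ℝ) (hQdeg : ∀ j < k, (Q j).Monic ∧ (Q j).natDegree = j)
    (m : ℕ) (hmk : m ≤ k) (d : Polynomial ℝ) (hd : ∀ j < m, Tf k (d * Q j) = 0) :
    ∀ e : Polynomial ℝ, e.natDegree < m ∨ e = 0 → Tf k (d * e) = 0 := by
  suffices H : ∀ N : ℕ, ∀ e : Polynomial ℝ, e.natDegree ≤ N → (e.natDegree < m ∨ e = 0) →
      Tf k (d * e) = 0 by
    intro e he; exact H e.natDegree e le_rfl he
  intro N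
  induction N using Nat.strong_induction_on with
  | _ N ih =>
    intro e heN he
    rcases he with he | rfl
    · by_cases he0 : e = 0
      · subst he0; simpa using Tf_zero k
      · set j := e.natDegree with hj
        have hjm : j < m := he
        obtain ⟨hQm, hQd⟩ := hQdeg j (lt_of_lt_of_le hjm hmk)
        set e' := e - e.leadingCoeff • Q j with he'
        have hdecomp : d * e = d * e' + e.leadingCoeff • (d * Q j) := by
          rw [he']; rw [smul_eq_C_mul, smul_eq_C_mul]; ring
        have hTe : Tf k (d * e) = Tf k (d * e') + e.leadingCoeff * Tf k (d * Q j) := by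
          rw [hdecomp, Tf_add, Tf_smul]
        rw [hTe, hd j hjm, mul_zero, add_zero]
        -- degree drop
        by_cases he'0 : e' = 0
        · rw [he'0, mul_zero, Tf_zero]
        · have hdeg' : e'.degree < e.degree := by
            rw [he']
            refine degree_sub_lt ?_ he0 ?_
            · rw [smul_eq_C_mul, degree_C_mul (leadingCoeff_ne_zero.2 he0),
                degree_eq_natDegree hQm.ne_zero, degree_eq_natDegree he0, hQd, ← hj]
            · rw [smul_eq_C_mul, leadingCoeff_mul, leadingCoeff_C, hQm.leadingCoeff, mul_one]
          have hnat' : e'.natDegree < e.natDegree :=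
            natDegree_lt_natDegree he'0 hdeg'
          exact ih e'.natDegree (lt_of_lt_of_le hnat' heN) e' le_rfl
            (Or.inl (lt_trans hnat' (lt_of_le_of_lt (le_of_eq rfl) hjm)))
    · simpa using Tf_zero k

lemma Tpos (k : ℕ) (hk : 1 ≤ k) (hcard : (hermiteR k).roots.card = k)
    (hnodup : (hermiteR k).roots.Nodup)
    (d : Polynomial ℝ) (hdeg : d.natDegree < k) (hT : Tf k (d * d) = 0) : d = 0 := by
  by_contra hd0
  have hT' : ((hermiteR k).roots.map (fun x => (d*d).eval x)).sum = 0 := hT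
  have hall : ∀ x ∈ (hermiteR k).roots, d.eval x = 0 := by
    intro x hx
    have hnn : ∀ y ∈ (hermiteR k).roots.map (fun x => (d * d).eval x), 0 ≤ y := by
      intro y hy
      obtain ⟨z, hz, rfl⟩ := Multiset.mem_map.1 hy
      simp only [eval_mul]
      exact mul_self_nonneg _
    have hmem : (d * d).eval x ∈ (hermiteR k).roots.map (fun x => (d * d).eval x) :=
      Multiset.mem_map_of_mem _ hx
    have hle := Multiset.single_le_sum hnn _ hmem
    rw [hT'] at hle
    have := hnn _ hmem
    have h0 : (d * d).eval x = 0 := le_antisymm hle this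
    rw [eval_mul] at h0
    exact mul_self_eq_zero.1 h0
  have hsub : (hermiteR k).roots ≤ d.roots := by
    refine Multiset.le_iff_count.2 (fun a => ?_)
    by_cases ha : a ∈ (hermiteR k).roots
    · have h1 : (hermiteR k).roots.count a = 1 := Multiset.count_eq_one_of_mem hnodup ha
      rw [h1]
      refine Multiset.one_le_count_iff_mem.2 ?_
      rw [mem_roots hd0]
      exact hall a ha
    · rw [Multiset.count_eq_zero_of_notMem ha]; omega
  have hcard2 := Multiset.card_le_card hsub
  rw [hcard] at hcard2
  have := d.card_roots'
  omega

lemma QeqP (k : ℕ) (hk : 1 ≤ k) (hcard : (hermiteR k).roots.card = k)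
    (hnodup : (hermiteR k).roots.Nodup)
    (Q : ℕ → Polynomial ℝ) (hQ : IsDualHermiteFamily k Q) :
    ∀ m, m ≤ k - 1 → Q m = Pf k m := by
  intro m
  induction m using Nat.strong_induction_on with
  | _ m ihm =>
    intro hm
    set d := Q m - Pf k m with hd
    have hmk : m < k := by omega
    obtain ⟨hQm, hQd⟩ := hQ.1 m hmk
    have hdnat : d = 0 ∨ d.natDegree < m := by
      by_cases hd0 : d = 0
      · exact Or.inl hd0
      · right
        have hdeg' : d.degree < (Q m).degree := by
          rw [hd]
          apply degree_sub_lt _ hQm.ne_zero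
          · rw [hQm.leadingCoeff, (Pf_monic k m).1.leadingCoeff]
          · rw [degree_eq_natDegree hQm.ne_zero, degree_eq_natDegree (Pf_monic k m).1.ne_zero,
              hQd, (Pf_monic k m).2]
        have := natDegree_lt_natDegree hd0 hdeg'
        rwa [hQd] at this
    rcases hdnat with hd0 | hdnat
    · rw [← sub_eq_zero]; exact hd0
    -- orthogonality of d against Q j, j < m
    have hdQ : ∀ j < m, Tf k (d * Q j) = 0 := by
      intro j hj
      have hjk : j < k := by omega
      have h1 : Tf k (Q m * Q j) = 0 := by
        have := hQ.2 m hmk j hjk (by omega)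
        rw [Tf]
        rw [← this]
        apply congrArg
        apply Multiset.map_congr rfl
        intro x hx
        simp
      have h2 : Tf k (Pf k m * Q j) = 0 := by
        rw [ihm j hj (by omega)]
        have := Tval k hk hcard (le_of_lt hj) hm
        rw [if_neg (by omega)] at this
        rw [mul_comm]
        exact this
      have : d * Q j = Q m * Q j - Pf k m * Q j := by rw [hd]; ring
      rw [this, Tf_sub, h1, h2, sub_zero]
    have hTdd : Tf k (d * d) = 0 :=
      Tvanish k Q hQ.1 m (by omega) d hdQ d (Or.inl hdnat)
    have := Tpos k hk hcard hnodup d (by omega) hTdd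
    rw [← sub_eq_zero]
    exact this

theorem stmt8' (k : ℕ) (hk : 1 ≤ k) (hcard : (hermiteR k).roots.card = k)
    (Q : ℕ → Polynomial ℝ)
    (hQ : IsDualHermiteFamily k Q) (m : ℕ) (hm : m ≤ k - 1) :
    ((hermiteR k).roots.map (fun x => (Q m).eval x ^ 2)).sum
      = (k.descFactorial (m + 1) : ℝ) := by
  have hnodup : (hermiteR k).roots.Nodup := by
    apply nodup_roots
    have : k = (k-1)+1 := by omega
    rw [this]
    exact hermiteR_separable (k-1)
  have hQP := QeqP k hk hcard hnodup Q hQ m hm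
  have h1 : ((hermiteR k).roots.map (fun x => (Q m).eval x ^ 2)).sum
      = Tf k (Pf k m * Pf k m) := by
    rw [Tf]
    apply congrArg
    apply Multiset.map_congr rfl
    intro x hx
    rw [hQP]
    simp [sq, eval_mul]
  rw [h1, Tval k hk hcard le_rfl hm, if_pos rfl]
  have : k * (k-1).descFactorial m = k.descFactorial (m+1) := by
    conv_rhs => rw [show k = (k-1)+1 from by omega]
    rw [Nat.succ_descFactorial_succ]
    congr 1
    omega
  rw [this]

section MatrixPart
open Matrix

noncomputable def Jmat (k : ℕ) : Matrix (Fin k) (Fin k) ℝ :=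
  fun i j => if i.1 + 1 = j.1 then Real.sqrt j.1 else if j.1 + 1 = i.1 then Real.sqrt i.1 else 0

lemma Jmat_herm (k : ℕ) : (Jmat k).IsHermitian := by
  unfold Matrix.IsHermitian
  ext i j
  simp only [Matrix.conjTranspose_apply, Jmat, star_trivial]
  split_ifs with h1 h2 h3 h4 <;> first | rfl | omega

noncomputable def vvec (k j : ℕ) : Fin k → ℝ :=
  fun i => if i.1 = j then Real.sqrt (Nat.factorial j) else 0

lemma vvec_big (k j : ℕ) (h : k ≤ j) : vvec k j = 0 := by
  funext i
  simp only [vvec, Pi.zero_apply, ite_eq_right_iff]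
  intro hi
  exfalso; have := i.isLt; omega

lemma vvec_single (k j : ℕ) (hj : j < k) :
    vvec k j = Pi.single (⟨j, hj⟩ : Fin k) (Real.sqrt (Nat.factorial j)) := by
  funext i
  rw [vvec, Pi.single_apply]
  congr 1
  simp [Fin.ext_iff]

lemma Jmul (k j : ℕ) (hj : j < k) :
    (Jmat k) *ᵥ (vvec k j) = vvec k (j+1) + (j : ℝ) • vvec k (j-1) := by
  rw [vvec_single k j hj, Matrix.mulVec_single]
  funext i
  simp only [Pi.add_apply, Pi.smul_apply, Matrix.col_apply, op_smul_eq_mul, smul_eq_mul, vvec, Jmat]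
  by_cases h1 : i.1 = j + 1
  · rw [if_neg (by omega), if_pos (by omega), if_pos h1, if_neg (by omega)]
    rw [h1, Nat.factorial_succ]
    rw [Nat.cast_mul, Real.sqrt_mul (by positivity)]
    ring
  · by_cases h2 : i.1 + 1 = j
    · rw [if_pos h2, if_neg (by omega), if_pos (by omega)]
      have hj1 : 1 ≤ j := by omega
      rw [show j = (j-1) + 1 from by omega, Nat.factorial_succ]
      rw [Nat.cast_mul, Real.sqrt_mul (by positivity)]
      rw [show (j-1) + 1 = j from by omega]
      conv_rhs => rw [← Real.mul_self_sqrt (show (0:ℝ) ≤ (j:ℕ) from by positivity)]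
      ring
    · rw [if_neg h2, if_neg (by omega), if_neg (by omega)]
      by_cases hj0 : j = 0
      · subst hj0; simp
      · rw [if_neg (by omega)]
        ring

lemma aevalH (k : ℕ) : ∀ j ≤ k, (aeval (Jmat k) (hermiteR j)) *ᵥ (vvec k 0) = vvec k j := by
  intro j
  induction j using Nat.strong_induction_on with
  | _ j ih =>
    match j with
    | 0 =>
      intro _
      rw [hermiteR_zero, _root_.map_one, Matrix.one_mulVec]
    | 1 =>
      intro h1
      rw [hermiteR_one, aeval_X]
      rw [Jmul k 0 (by omega)]
      norm_num
    | (j+2) =>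
      intro hk2
      rw [hermiteR_rec, _root_.map_sub, _root_.map_mul, aeval_X, _root_.map_smul,
        Matrix.sub_mulVec, ← Matrix.mulVec_mulVec, ih (j+1) (by omega) (by omega),
        Matrix.smul_mulVec, ih j (by omega) (by omega),
        Jmul k (j+1) (by omega)]
      simp only [Nat.add_sub_cancel]
      push_cast
      module

lemma aeval_Hk_zero (k : ℕ) : aeval (Jmat k) (hermiteR k) = 0 := by
  have hcol : ∀ j < k, (aeval (Jmat k) (hermiteR k)) *ᵥ vvec k j = 0 := by
    intro j hj
    rw [← aevalH k j (le_of_lt hj), Matrix.mulVec_mulVec, ← _root_.map_mul, mul_comm,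
      _root_.map_mul, ← Matrix.mulVec_mulVec, aevalH k k le_rfl, vvec_big k k le_rfl,
      Matrix.mulVec_zero]
  ext i j
  have hfac : Real.sqrt (Nat.factorial j.1) ≠ 0 := by
    apply Real.sqrt_ne_zero'.2
    exact_mod_cast Nat.factorial_pos j.1
  have h := hcol j.1 j.isLt
  rw [vvec_single k j.1 j.isLt] at h
  have h2 := congrFun h i
  simp only [Fin.eta, Matrix.mulVec_single, Pi.zero_apply] at h2
  rcases mul_eq_zero.1 h2 with h3 | h3
  · simpa using h3
  · exact absurd h3 hfac

lemma aeval_mulVec (k : ℕ) (A : Matrix (Fin k) (Fin k) ℝ) (v : Fin k → ℝ) (μ : ℝ)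
    (hv : A *ᵥ v = μ • v) (p : Polynomial ℝ) :
    (aeval A p) *ᵥ v = p.eval μ • v := by
  have hpow : ∀ n : ℕ, (A ^ n) *ᵥ v = μ ^ n • v := by
    intro n
    induction n with
    | zero => simp
    | succ n ihn =>
        rw [pow_succ, ← Matrix.mulVec_mulVec, hv, Matrix.mulVec_smul, ihn,
          smul_smul, pow_succ]
        ring_nf
  induction p using Polynomial.induction_on' with
  | add p q hp hq => rw [map_add, Matrix.add_mulVec, hp, hq, eval_add, add_smul]
  | monomial n a =>
      rw [aeval_monomial, eval_monomial]
      rw [Algebra.algebraMap_eq_smul_one, smul_mul_assoc, one_mul,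
        Matrix.smul_mulVec, hpow, smul_smul]

-- eigenvalues are roots
noncomputable def muE (k : ℕ) : Fin k → ℝ := (Jmat_herm k).eigenvalues

lemma uvec_eigen (k : ℕ) (i : Fin k) :
    (Jmat k) *ᵥ ((WithLp.equiv 2 _) ((Jmat_herm k).eigenvectorBasis i))
      = muE k i • ((WithLp.equiv 2 _) ((Jmat_herm k).eigenvectorBasis i)) :=
  (Jmat_herm k).mulVec_eigenvectorBasis i

lemma uvec_ne_zero (k : ℕ) (i : Fin k) :
    ((WithLp.equiv 2 _) ((Jmat_herm k).eigenvectorBasis i)) ≠ (0 : Fin k → ℝ) := by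
  intro h
  have := (Jmat_herm k).eigenvectorBasis.orthonormal.ne_zero i
  apply this
  exact (WithLp.equiv 2 _).injective (by simpa using h)

lemma muE_root (k : ℕ) (i : Fin k) : (hermiteR k).IsRoot (muE k i) := by
  have h := aeval_mulVec k (Jmat k) _ _ (uvec_eigen k i) (hermiteR k)
  rw [aeval_Hk_zero, Matrix.zero_mulVec] at h
  have := h.symm
  rcases smul_eq_zero.1 this with h1 | h2
  · exact h1
  · exact absurd h2 (uvec_ne_zero k i)

lemma eigenvec_first (k : ℕ) (hk : 1 ≤ k) (v : Fin k → ℝ) (μ : ℝ)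
    (hv : (Jmat k) *ᵥ v = μ • v) (h0 : v ⟨0, by omega⟩ = 0) : v = 0 := by
  have claim : ∀ j, ∀ hj : j < k, v ⟨j, hj⟩ = 0 := by
    intro j
    induction j using Nat.strong_induction_on with
    | _ j ih =>
      intro hj
      match j with
      | 0 => exact h0
      | (j'+1) =>
        have hj' : j' < k := by omega
        have hrow := congrFun hv ⟨j', hj'⟩
        rw [Pi.smul_apply, smul_eq_mul, ih j' (by omega) hj'] at hrow
        rw [Matrix.mulVec] at hrow
        have hsum : (fun l => Jmat k ⟨j', hj'⟩ l * v l) = (fun l : Fin k =>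
            if l = (⟨j'+1, hj⟩ : Fin k) then Real.sqrt (j'+1) * v l else 0) := by
          funext l
          by_cases hl : l = (⟨j'+1, hj⟩ : Fin k)
          · rw [if_pos hl, hl]
            congr 1
            show Jmat k _ _ = _
            rw [Jmat]
            rw [if_pos (by simp)]
            norm_num
          · rw [if_neg hl]
            show Jmat k _ _ * _ = _
            rw [Jmat]
            by_cases hb1 : (j' : ℕ) + 1 = l.1
            · exfalso; exact hl (Fin.ext (by simpa using hb1.symm))
            · rw [if_neg hb1]
              by_cases hb2 : l.1 + 1 = j'
              · rw [if_pos hb2]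
                have : v l = 0 := by
                  have := ih l.1 (by omega) l.isLt
                  simpa using this
                rw [this, mul_zero]
              · rw [if_neg hb2, zero_mul]
        rw [show (Jmat k ⟨j', hj'⟩ ⬝ᵥ v) = ∑ l, Jmat k ⟨j', hj'⟩ l * v l from rfl] at hrow
        have hsum2 : ∑ l, Jmat k ⟨j', hj'⟩ l * v l
            = Real.sqrt (j'+1) * v ⟨j'+1, hj⟩ := by
          rw [show (fun l => Jmat k ⟨j', hj'⟩ l * v l) = _ from hsum]
          rw [Finset.sum_ite_eq' Finset.univ (⟨j'+1, hj⟩ : Fin k)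
            (fun l => Real.sqrt (j'+1) * v l)]
          simp
        rw [hsum2, mul_zero] at hrow
        have hsqrt : Real.sqrt (j'+1) ≠ 0 := by
          apply Real.sqrt_ne_zero'.2
          positivity
        exact (mul_eq_zero.1 hrow).resolve_left hsqrt
  funext i
  have := claim i.1 i.isLt
  simpa using this

lemma muE_inj (k : ℕ) (hk : 1 ≤ k) : Function.Injective (muE k) := by
  intro i j hij
  by_contra hne
  set B := (Jmat_herm k).eigenvectorBasis with hB
  set ui : Fin k → ℝ := (WithLp.equiv 2 _) (B i) with hui
  set uj : Fin k → ℝ := (WithLp.equiv 2 _) (B j) with huj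
  have hei := uvec_eigen k i
  have hej := uvec_eigen k j
  rw [← hij] at hej
  -- first components
  have hOne : ui ⟨0, by omega⟩ ≠ 0 := by
    intro h
    exact uvec_ne_zero k i (eigenvec_first k hk ui (muE k i) hei h)
  set w : Fin k → ℝ := ui ⟨0, by omega⟩ • uj - uj ⟨0, by omega⟩ • ui with hw
  have hweig : (Jmat k) *ᵥ w = muE k i • w := by
    rw [hw, Matrix.mulVec_sub, Matrix.mulVec_smul, Matrix.mulVec_smul, hei, hej]
    module
  have hw0 : w ⟨0, by omega⟩ = 0 := by
    rw [hw]; simp [mul_comm]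
  have hwz : w = 0 := eigenvec_first k hk w (muE k i) hweig hw0
  rw [hw, sub_eq_zero] at hwz
  -- transfer to the orthonormal basis
  have horth := orthonormal_iff_ite.1 B.orthonormal
  have hBij : (inner ℝ (B j) (B i) : ℝ) = 0 := by
    rw [horth j i, if_neg (Ne.symm hne)]
  have hBeq : (ui ⟨0, by omega⟩ : ℝ) • B j = uj ⟨0, by omega⟩ • B i := (WithLp.equiv 2 _).injective hwz
  have h1 : (inner ℝ (B j) ((ui ⟨0, by omega⟩ : ℝ) • B j) : ℝ) = ui ⟨0, by omega⟩ := by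
    rw [real_inner_smul_right, horth j j, if_pos rfl, mul_one]
  rw [hBeq, real_inner_smul_right, hBij, mul_zero] at h1
  exact hOne h1.symm


lemma hermiteR_roots_card (k : ℕ) (hk : 1 ≤ k) : (hermiteR k).roots.card = k := by
  have hle : (hermiteR k).roots.card ≤ k := by
    have := (hermiteR k).card_roots'
    rwa [hermiteR_natDegree] at this
  have hge : k ≤ (hermiteR k).roots.card := by
    have hsub : Finset.image (muE k) Finset.univ ⊆ (hermiteR k).roots.toFinset := by
      intro a ha
      obtain ⟨i, _, rfl⟩ := Finset.mem_image.1 ha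
      rw [Multiset.mem_toFinset, mem_roots (hermiteR_ne_zero k)]
      exact muE_root k i
    have h1 := Finset.card_le_card hsub
    rw [Finset.card_image_of_injective _ (muE_inj k hk), Finset.card_univ,
      Fintype.card_fin] at h1
    exact le_trans h1 (Multiset.toFinset_card_le _)
  omega

end MatrixPart

theorem stmt8 (k : ℕ) (hk : 1 ≤ k) (Q : ℕ → Polynomial ℝ)
    (hQ : IsDualHermiteFamily k Q) (m : ℕ) (hm : m ≤ k - 1) :
    ((hermiteR k).roots.map (fun x => (Q m).eval x ^ 2)).sum
      = (k.descFactorial (m + 1) : ℝ) := by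
  exact stmt8' k hk (hermiteR_roots_card k hk) Q hQ m hm
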